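/- Let f(z) = z + ∑_{k=3}^∞ a_k z^k be analytic on 𝔻 (so the coefficient of z² vanishes) with ∑_{k=3}^∞ k·(k−1)·|a_k| ≤ 1. Then f belongs to the parabolic starlike class S_p. -/

import Mathlib

open Complex Metric

/-- The open unit disc in `ℂ`. -/
def unitDisc : Set ℂ := Metric.ball 0 1

/-- `f ∈ 𝒜ₙ`: `f` is analytic on the unit disc with power series
`f(z) = z + ∑_{k=n+1}^∞ a_k z^k`. -/
def MemA (n : ℕ) (f : ℂ → ℂ) : Prop :=
  DifferentiableOn ℂ f unitDisc ∧
    ∃ a : ℕ → ℂ, ∀ z ∈ unitDisc, f z = z + ∑' k : ℕ, a k * z ^ (n + 1 + k)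

/-- `f ∈ Ωₙ`: `f ∈ 𝒜ₙ` and `|z f'(z) - f(z)| < 1/2` on the unit disc. -/
def MemOmega (n : ℕ) (f : ℂ → ℂ) : Prop :=
  MemA n f ∧ ∀ z ∈ unitDisc, ‖z * deriv f z - f z‖ < 1 / 2

lemma knn (k : ℕ) : (0:ℝ) ≤ (k:ℝ) := Nat.cast_nonneg k

lemma bd0 {x c : ℝ} (hx : 0 ≤ x) (hc : 0 ≤ c) : c ≤ (3 + x) * (2 + x) * c := by
  nlinarith [mul_nonneg hc hx, mul_nonneg (mul_nonneg hc hx) hx]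

lemma bd1 {x c : ℝ} (hx : 0 ≤ x) (hc : 0 ≤ c) : (3 + x) * c ≤ (3 + x) * (2 + x) * c := by
  nlinarith [mul_nonneg (mul_nonneg (by linarith : (0:ℝ) ≤ 3 + x) hc)
    (by linarith : (0:ℝ) ≤ 1 + x)]

lemma bd2 {x c : ℝ} (hx : 0 ≤ x) (hc : 0 ≤ c) : (2 + x) * c ≤ (3 + x) * (2 + x) * c := by
  nlinarith [mul_nonneg (mul_nonneg (by linarith : (0:ℝ) ≤ 2 + x) hc)
    (by linarith : (0:ℝ) ≤ 2 + x)]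

lemma norm_term (c : ℕ) (b z : ℂ) (m : ℕ) :
    ‖((c : ℂ)) * b * z ^ m‖ = (c : ℝ) * ‖b‖ * ‖z‖ ^ m := by
  rw [norm_mul, norm_mul, norm_pow, Complex.norm_natCast]

lemma summ_aux (a : ℕ → ℂ)
    (hsum : Summable fun k : ℕ => ((3 : ℝ) + k) * ((2 : ℝ) + k) * ‖a k‖)
    (g : ℕ → ℂ) (hg : ∀ k, ‖g k‖ ≤ ((3 : ℝ) + k) * ((2 : ℝ) + k) * ‖a k‖) :
    Summable g :=
  Summable.of_norm
    (Summable.of_nonneg_of_le (fun k => norm_nonneg _) hg hsum)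

lemma deriv_aux (a : ℕ → ℂ)
    (hsum : Summable fun k : ℕ => ((3 : ℝ) + k) * ((2 : ℝ) + k) * ‖a k‖)
    {z : ℂ} (hz : ‖z‖ < 1) :
    HasDerivAt (fun y : ℂ => ∑' k : ℕ, a k * y ^ (3 + k))
      (∑' k : ℕ, ((3 + k : ℕ) : ℂ) * a k * z ^ (2 + k)) z := by
  have hu : Summable fun k : ℕ => ((3 : ℝ) + k) * ‖a k‖ := by
    apply Summable.of_nonneg_of_le (fun k => by positivity) _ hsum
    intro k
    exact bd1 (knn k) (norm_nonneg _)
  have hg : ∀ (k : ℕ) (y : ℂ), y ∈ ball (0:ℂ) 1 →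
      HasDerivAt (fun y : ℂ => a k * y ^ (3 + k)) (((3 + k : ℕ) : ℂ) * a k * y ^ (2 + k)) y := by
    intro k y _
    have h := (hasDerivAt_pow (3 + k) y).const_mul (a k)
    have he : 3 + k - 1 = 2 + k := by omega
    rw [he] at h
    refine h.congr_deriv ?_
    ring
  have hg' : ∀ (k : ℕ) (y : ℂ), y ∈ ball (0:ℂ) 1 →
      ‖((3 + k : ℕ) : ℂ) * a k * y ^ (2 + k)‖ ≤ ((3 : ℝ) + k) * ‖a k‖ := by
    intro k y hy
    have hyn : ‖y‖ < 1 := by simpa [mem_ball, dist_eq_norm] using hy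
    rw [norm_term]
    have h1 : ‖y‖ ^ (2 + k) ≤ 1 := pow_le_one₀ (norm_nonneg _) hyn.le
    push_cast
    exact mul_le_of_le_one_right (by positivity) h1
  have h0 : Summable fun k : ℕ => a k * (0:ℂ) ^ (3 + k) := by
    apply summable_zero.congr
    intro k
    simp
  exact hasDerivAt_tsum_of_isPreconnected hu
    (Metric.isOpen_ball : IsOpen (ball (0:ℂ) 1)) (convex_ball _ _).isPreconnected
    hg hg' (mem_ball_self one_pos) h0
    (by simpa [mem_ball, dist_eq_norm] using hz)

theorem stmt_11 (f : ℂ → ℂ) (a : ℕ → ℂ)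
    (hf : DifferentiableOn ℂ f unitDisc)
    (hrep : ∀ z ∈ unitDisc, f z = z + ∑' k : ℕ, a k * z ^ (3 + k))
    (hsum : Summable fun k : ℕ => ((3 : ℝ) + k) * ((2 : ℝ) + k) * ‖a k‖)
    (hle : ∑' k : ℕ, ((3 : ℝ) + k) * ((2 : ℝ) + k) * ‖a k‖ ≤ 1) :
    ∀ z ∈ unitDisc, z ≠ 0 →
      f z ≠ 0 ∧
        (z * deriv f z / f z).re > ‖z * deriv f z / f z - 1‖ := by
  intro z hzD hz0
  have hz : ‖z‖ < 1 := by simpa [unitDisc, mem_ball, dist_eq_norm] using hzD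
  have hr0 : 0 < ‖z‖ := norm_pos_iff.mpr hz0
  have hD := deriv_aux a hsum hz
  have hFd : HasDerivAt (fun y : ℂ => y + ∑' k : ℕ, a k * y ^ (3 + k))
      (1 + ∑' k : ℕ, ((3 + k : ℕ) : ℂ) * a k * z ^ (2 + k)) z :=
    (hasDerivAt_id z).add hD
  have heq : f =ᶠ[nhds z] (fun y : ℂ => y + ∑' k : ℕ, a k * y ^ (3 + k)) := by
    filter_upwards [(Metric.isOpen_ball).mem_nhds (show z ∈ unitDisc from hzD)] with y hy
    exact hrep y hy
  have hderiv : deriv f z = 1 + ∑' k : ℕ, ((3 + k : ℕ) : ℂ) * a k * z ^ (2 + k) := by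
    rw [heq.deriv_eq, hFd.deriv]
  have hpow_le : ∀ k : ℕ, ‖z‖ ^ (3 + k) ≤ ‖z‖ ^ 3 := fun k =>
    pow_le_pow_of_le_one (norm_nonneg _) hz.le (by omega)
  have hpow1 : ∀ k : ℕ, ‖z‖ ^ (3 + k) ≤ 1 := fun k =>
    pow_le_one₀ (norm_nonneg _) hz.le
  have hpow0 : ∀ k : ℕ, (0:ℝ) ≤ ‖z‖ ^ (3 + k) := fun k => by positivity
  have hS1 : Summable fun k : ℕ => ((3 + k : ℕ) : ℂ) * a k * z ^ (3 + k) := by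
    apply summ_aux a hsum
    intro k
    rw [norm_term]
    push_cast
    exact le_trans (mul_le_of_le_one_right (by positivity) (hpow1 k))
      (bd1 (knn k) (norm_nonneg _))
  have hS2 : Summable fun k : ℕ => a k * z ^ (3 + k) := by
    apply summ_aux a hsum
    intro k
    rw [norm_mul, norm_pow]
    exact le_trans (mul_le_of_le_one_right (norm_nonneg _) (hpow1 k))
      (bd0 (knn k) (norm_nonneg _))
  have hzfz : z * deriv f z - f z = ∑' k : ℕ, ((2 + k : ℕ) : ℂ) * a k * z ^ (3 + k) := by
    rw [hderiv, hrep z hzD, mul_add, mul_one]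
    rw [← tsum_mul_left]
    have h2 : (fun k : ℕ => z * (((3 + k : ℕ) : ℂ) * a k * z ^ (2 + k)))
        = fun k : ℕ => ((3 + k : ℕ) : ℂ) * a k * z ^ (3 + k) := by
      funext k
      rw [show 3 + k = (2 + k) + 1 by omega, pow_succ]
      ring
    rw [h2]
    have h3 : (fun k : ℕ => ((2 + k : ℕ) : ℂ) * a k * z ^ (3 + k))
        = fun k : ℕ => ((3 + k : ℕ) : ℂ) * a k * z ^ (3 + k) - a k * z ^ (3 + k) := by
      funext k; push_cast; ring
    rw [h3, Summable.tsum_sub hS1 hS2]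
    ring
  set P : ℝ := ∑' k : ℕ, ((2 : ℝ) + k) * ‖a k‖ * ‖z‖ ^ (3 + k) with hP
  set Q : ℝ := ∑' k : ℕ, ‖a k‖ * ‖z‖ ^ (3 + k) with hQ
  have hPs : Summable fun k : ℕ => ((2 : ℝ) + k) * ‖a k‖ * ‖z‖ ^ (3 + k) := by
    apply Summable.of_nonneg_of_le (fun k => by positivity) _ hsum
    intro k
    exact le_trans (mul_le_of_le_one_right (by positivity) (hpow1 k))
      (bd2 (knn k) (norm_nonneg _))
  have hQs : Summable fun k : ℕ => ‖a k‖ * ‖z‖ ^ (3 + k) := by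
    apply Summable.of_nonneg_of_le (fun k => by positivity) _ hsum
    intro k
    exact le_trans (mul_le_of_le_one_right (norm_nonneg _) (hpow1 k))
      (bd0 (knn k) (norm_nonneg _))
  have hP0 : 0 ≤ P := tsum_nonneg fun k => by positivity
  have hQ0 : 0 ≤ Q := tsum_nonneg fun k => by positivity
  have hkey : 2 * P + Q ≤ ‖z‖ ^ 3 := by
    have h1 : 2 * P + Q = ∑' k : ℕ,
        (2 * (((2 : ℝ) + k) * ‖a k‖ * ‖z‖ ^ (3 + k)) + ‖a k‖ * ‖z‖ ^ (3 + k)) := by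
      rw [hP, hQ, ← tsum_mul_left, Summable.tsum_add (hPs.mul_left 2) hQs]
    rw [h1]
    have h2 : ∑' k : ℕ,
        (2 * (((2 : ℝ) + k) * ‖a k‖ * ‖z‖ ^ (3 + k)) + ‖a k‖ * ‖z‖ ^ (3 + k))
        ≤ ∑' k : ℕ, ((3 : ℝ) + k) * ((2 : ℝ) + k) * ‖a k‖ * ‖z‖ ^ 3 := by
      apply Summable.tsum_le_tsum _ ((hPs.mul_left 2).add hQs) (hsum.mul_right _)
      intro k
      have h5 : (5 : ℝ) + 2 * k ≤ ((3 : ℝ) + k) * ((2 : ℝ) + k) := by nlinarith [knn k]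
      have hrk : ‖z‖ ^ (3 + k) ≤ ‖z‖ ^ 3 := hpow_le k
      calc 2 * (((2 : ℝ) + k) * ‖a k‖ * ‖z‖ ^ (3 + k)) + ‖a k‖ * ‖z‖ ^ (3 + k)
          = ((5 : ℝ) + 2 * k) * (‖a k‖ * ‖z‖ ^ (3 + k)) := by ring
        _ ≤ (((3 : ℝ) + k) * ((2 : ℝ) + k)) * (‖a k‖ * ‖z‖ ^ (3 + k)) :=
            mul_le_mul_of_nonneg_right h5 (by positivity)
        _ = (((3 : ℝ) + k) * ((2 : ℝ) + k) * ‖a k‖) * ‖z‖ ^ (3 + k) := by ring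
        _ ≤ (((3 : ℝ) + k) * ((2 : ℝ) + k) * ‖a k‖) * ‖z‖ ^ 3 :=
            mul_le_mul_of_nonneg_left hrk (by positivity)
    calc _ ≤ ∑' k : ℕ, ((3 : ℝ) + k) * ((2 : ℝ) + k) * ‖a k‖ * ‖z‖ ^ 3 := h2
      _ = (∑' k : ℕ, ((3 : ℝ) + k) * ((2 : ℝ) + k) * ‖a k‖) * ‖z‖ ^ 3 := tsum_mul_right
      _ ≤ 1 * ‖z‖ ^ 3 := mul_le_mul_of_nonneg_right hle (by positivity)
      _ = ‖z‖ ^ 3 := one_mul _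
  have hr3 : ‖z‖ ^ 3 < ‖z‖ := by
    nlinarith [mul_pos (mul_pos hr0 (show (0:ℝ) < 1 - ‖z‖ by linarith))
      (show (0:ℝ) < 1 + ‖z‖ by linarith)]
  have hTnorm : ‖z * deriv f z - f z‖ ≤ P := by
    rw [hzfz, hP]
    refine (norm_tsum_le_tsum_norm ?_).trans_eq ?_
    · apply hPs.congr
      intro k
      rw [norm_term]; push_cast; ring
    · apply tsum_congr
      intro k
      rw [norm_term]; push_cast; ring
  have hGnorm : ‖f z - z‖ ≤ Q := by
    rw [hrep z hzD]
    simp only [add_sub_cancel_left]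
    refine (norm_tsum_le_tsum_norm ?_).trans_eq ?_
    · apply hQs.congr
      intro k
      rw [norm_mul, norm_pow]
    · apply tsum_congr
      intro k
      rw [norm_mul, norm_pow]
  have hfzlow : ‖z‖ - Q ≤ ‖f z‖ := by
    have h1 : ‖z‖ - ‖z - f z‖ ≤ ‖z - (z - f z)‖ := norm_sub_norm_le _ _
    have h'' : z - (z - f z) = f z := by ring
    rw [h''] at h1
    have h2 : ‖z - f z‖ ≤ Q := by rw [norm_sub_rev]; exact hGnorm
    linarith
  have hfz0 : f z ≠ 0 := by
    have : 0 < ‖f z‖ := by linarith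
    exact norm_pos_iff.mp this
  refine ⟨hfz0, ?_⟩
  have hw1 : z * deriv f z / f z - 1 = (z * deriv f z - f z) / f z := by
    field_simp
  have hwlt : ‖z * deriv f z / f z - 1‖ < 1 / 2 := by
    rw [hw1, norm_div]
    rw [div_lt_iff₀ (norm_pos_iff.mpr hfz0)]
    linarith
  have hre : (1 : ℝ) - ‖z * deriv f z / f z - 1‖ ≤ (z * deriv f z / f z).re := by
    set w := z * deriv f z / f z with hw
    have h1 : (w - 1).re = w.re - 1 := by simp
    have h2 : |(w - 1).re| ≤ ‖w - 1‖ := abs_re_le_norm (w - 1)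
    have h3 : -(‖w - 1‖) ≤ (w - 1).re := neg_le_of_abs_le h2
    linarith [h1 ▸ h3]
  linarith
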